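/- Let H be a RKHS on D with kernel K that can be written as K(x,y) = ∑_{i=1}^m |M_i(x,y)|², where each M_i is a positive semi-definite function on D×D that is constant on the diagonal, M_i(x,x) = c_i. Assume the constant function 1 belongs to H and let S be the functional f ↦ ⟨f,1⟩. Then e_n(H,S)² ≥ ‖1‖²_H − n/κ, where κ = ∑_i c_i² = K(x,x). -/

import Mathlib

open scoped ComplexOrder


private lemma sum_comm4 {n : ℕ} (F : Fin n → Fin n → Fin n → Fin n → ℂ) :
    ∑ j, ∑ k, ∑ p, ∑ q, F j k p q = ∑ p, ∑ q, ∑ j, ∑ k, F j k p q := by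
  have h1 : ∀ j, ∑ k, ∑ p, ∑ q, F j k p q = ∑ p, ∑ q, ∑ k, F j k p q := by
    intro j
    rw [Finset.sum_comm]
    exact Finset.sum_congr rfl fun p _ => Finset.sum_comm
  simp_rw [h1]
  rw [Finset.sum_comm]
  exact Finset.sum_congr rfl fun p _ => Finset.sum_comm

open scoped MatrixOrder in
private lemma psd_factor {n : ℕ} (B : Matrix (Fin n) (Fin n) ℂ) (hB : B.PosSemidef) :
    ∃ C : Matrix (Fin n) (Fin n) ℂ, B = C.conjTranspose * C := by
  obtain ⟨X, hX, -, hXB⟩ := CFC.exists_sqrt_of_isSelfAdjoint_of_quasispectrumRestricts hB.isHermitian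
    (QuasispectrumRestricts.nnreal_of_nonneg hB.nonneg)
  exact ⟨X, by rw [← hXB]; exact congrArg (· * X) hX.star_eq.symm⟩

private lemma aux_key {n : ℕ} (B : Matrix (Fin n) (Fin n) ℂ) (hB : B.PosSemidef)
    (c : ℝ) (hd : ∀ j, B j j = (c : ℂ)) (a : Fin n → ℂ) :
    ∃ R : ℝ, 0 ≤ R ∧
      (∑ j, ∑ k, (starRingEnd ℂ) (a j) * a k * ((‖B j k‖) ^ 2 : ℂ)) = (R : ℂ) ∧
      c ^ 2 * (‖∑ j, a j‖) ^ 2 ≤ n * R := by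
  obtain ⟨C, hC⟩ := psd_factor B hB
  have hB' : ∀ j k, B j k = ∑ p, (starRingEnd ℂ) (C p j) * C p k := by
    intro j k
    rw [hC]
    simp [Matrix.mul_apply, Matrix.conjTranspose_apply]
  set T : Fin n → Fin n → ℂ :=
    fun p q => ∑ j, (starRingEnd ℂ) (a j) * (C p j * (starRingEnd ℂ) (C q j)) with hT
  refine ⟨∑ p, ∑ q, (‖T p q‖) ^ 2, by positivity, ?_, ?_⟩
  · -- main identity
    have habs : ∀ z : ℂ, ((‖z‖) ^ 2 : ℂ) = z * (starRingEnd ℂ) z := by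
      intro z
      rw [Complex.mul_conj]
      norm_cast
      exact (Complex.normSq_eq_norm_sq z).symm
    push_cast
    calc (∑ j, ∑ k, (starRingEnd ℂ) (a j) * a k * ((‖B j k‖) ^ 2 : ℂ))
        = ∑ j, ∑ k, ∑ p, ∑ q, ((starRingEnd ℂ) (a j) * a k) *
            (((starRingEnd ℂ) (C p j) * C p k) *
              ((starRingEnd ℂ) ((starRingEnd ℂ) (C q j) * C q k))) := by
          refine Finset.sum_congr rfl fun j _ => Finset.sum_congr rfl fun k _ => ?_
          rw [habs, hB', map_sum, Finset.sum_mul_sum, Finset.mul_sum]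
          refine Finset.sum_congr rfl fun p _ => ?_
          rw [Finset.mul_sum]
      _ = ∑ p, ∑ q, ∑ j, ∑ k, ((starRingEnd ℂ) (a j) * a k) *
            (((starRingEnd ℂ) (C p j) * C p k) *
              ((starRingEnd ℂ) ((starRingEnd ℂ) (C q j) * C q k))) := sum_comm4 _
      _ = ∑ p, ∑ q, ∑ j, ∑ k, ((starRingEnd ℂ) (a j) * a k) *
            (((starRingEnd ℂ) (C q j) * C q k) *
              ((starRingEnd ℂ) ((starRingEnd ℂ) (C p j) * C p k))) := Finset.sum_comm
      _ = ∑ p, ∑ q, ((‖T p q‖) ^ 2 : ℂ) := by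
          refine Finset.sum_congr rfl fun p _ => Finset.sum_congr rfl fun q _ => ?_
          rw [habs, hT]
          simp only [map_sum, Finset.sum_mul_sum]
          refine Finset.sum_congr rfl fun j _ => Finset.sum_congr rfl fun k _ => ?_
          simp only [map_mul, Complex.conj_conj]
          ring
  · -- Cauchy-Schwarz chain
    have htr : ∑ p, T p p = (c : ℂ) * (starRingEnd ℂ) (∑ j, a j) := by
      rw [Finset.sum_comm]
      simp only [map_sum, Finset.mul_sum]
      refine Finset.sum_congr rfl fun j _ => ?_
      rw [← Finset.mul_sum]
      have : ∑ p, C p j * (starRingEnd ℂ) (C p j) = (c : ℂ) := by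
        rw [← hd j, hB']
        exact Finset.sum_congr rfl fun p _ => mul_comm _ _
      rw [this]; ring
    have h1 : c ^ 2 * (‖∑ j, a j‖) ^ 2 = (‖∑ p, T p p‖) ^ 2 := by
      have habs2 : ‖(c : ℂ) * (starRingEnd ℂ) (∑ j, a j)‖
          = |c| * ‖∑ j, a j‖ := by
        rw [norm_mul, Complex.norm_real, Complex.norm_conj, Real.norm_eq_abs]
      rw [htr, habs2, mul_pow, sq_abs]
    rw [h1]
    have h2 : (‖∑ p, T p p‖) ^ 2 ≤ (∑ p, ‖T p p‖) ^ 2 := by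
      have hle := norm_sum_le Finset.univ (fun p => T p p)
      have h0 : (0:ℝ) ≤ ‖∑ p, T p p‖ := norm_nonneg _
      nlinarith [hle]
    have h3 : (∑ p, ‖T p p‖) ^ 2 ≤ n * ∑ p, (‖T p p‖) ^ 2 := by
      simpa using sq_sum_le_card_mul_sum_sq (s := Finset.univ)
        (f := fun p => ‖T p p‖)
    have h4 : ∑ p, (‖T p p‖) ^ 2 ≤ ∑ p, ∑ q, (‖T p q‖) ^ 2 := by
      refine Finset.sum_le_sum fun p _ => ?_
      exact Finset.single_le_sum (f := fun q => (‖T p q‖) ^ 2)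
        (fun q _ => by positivity) (Finset.mem_univ p)
    calc (‖∑ p, T p p‖) ^ 2 ≤ (∑ p, ‖T p p‖) ^ 2 := h2
      _ ≤ n * ∑ p, (‖T p p‖) ^ 2 := h3
      _ ≤ n * ∑ p, ∑ q, (‖T p q‖) ^ 2 :=
          mul_le_mul_of_nonneg_left h4 (by positivity)

/-- If the kernel of an RKHS `H` on `D` (with `rep x = K(x,·)`, `f(x) = ⟪rep x, f⟫`,
`K x y = ⟪rep y, rep x⟫`) is a sum of squares `K(x,y) = ∑ᵢ |Mᵢ(x,y)|²` of positive
semi-definite functions with constant diagonals `Mᵢ(x,x) = cᵢ`, and `1 ∈ H`, then for the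
functional `S(f) = ⟨f,1⟩` one has `e_n(H,S)² ≥ ‖1‖² - n/κ` with `κ = ∑ᵢ cᵢ²`. -/
theorem sum_of_squares_quadrature_lower_bound {D H : Type*} [Nonempty D]
    [NormedAddCommGroup H] [InnerProductSpace ℂ H] [CompleteSpace H]
    (K : D → D → ℂ) (rep : D → H)
    (hK : ∀ x y, K x y = (inner ℂ (rep y) (rep x) : ℂ))
    (m : ℕ) (M : Fin m → D → D → ℂ) (c : Fin m → ℝ)
    (hpsd : ∀ (i : Fin m) (N : ℕ) (x : Fin N → D),
      Matrix.PosSemidef (Matrix.of fun j k : Fin N => M i (x j) (x k)))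
    (hdiag : ∀ i x, M i x x = (c i : ℂ))
    (hsum : ∀ x y, K x y = ∑ i, ((‖M i x y‖) ^ 2 : ℂ))
    (one : H) (hone : ∀ x, (inner ℂ (rep x) one : ℂ) = 1)
    (κ : ℝ) (hκ : κ = ∑ i, (c i) ^ 2) (n : ℕ) :
    ‖one‖ ^ 2 - n / κ ≤ ⨅ (x : Fin n → D) (a : Fin n → ℂ),
      ‖(∑ k, (starRingEnd ℂ) (a k) • rep (x k)) - one‖ ^ 2 := by
  obtain ⟨x0⟩ := ‹Nonempty D›
  have hκ0 : ((κ : ℝ) : ℂ) = (inner ℂ (rep x0) (rep x0) : ℂ) := by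
    rw [← hK x0 x0, hsum x0 x0, hκ]
    push_cast
    refine Finset.sum_congr rfl fun i _ => ?_
    rw [hdiag, Complex.norm_real, Real.norm_eq_abs]
    norm_cast
    rw [sq_abs]
  have hκnorm : κ = ‖rep x0‖ ^ 2 := by
    have h2 := inner_self_eq_norm_sq (𝕜 := ℂ) (rep x0)
    rw [← hκ0] at h2
    simpa using h2
  have hrep0 : rep x0 ≠ 0 := by
    intro h
    have h1 := hone x0
    rw [h, inner_zero_left] at h1
    exact one_ne_zero h1.symm
  have hκpos : 0 < κ := by
    rw [hκnorm]
    exact pow_pos (norm_pos_iff.mpr hrep0) 2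
  refine le_ciInf fun x => le_ciInf fun a => ?_
  rcases Nat.eq_zero_or_pos n with hn | hn
  · subst hn
    simp
  have hnR : (0 : ℝ) < (n : ℝ) := by exact_mod_cast hn
  set g : H := ∑ k, (starRingEnd ℂ) (a k) • rep (x k) with hg
  set s : ℂ := ∑ k, a k with hs
  -- the per-i inequality
  have key : ∀ i : Fin m, ∃ R : ℝ, 0 ≤ R ∧
      (∑ j, ∑ k, (starRingEnd ℂ) (a j) * a k *
        ((‖M i (x j) (x k)‖) ^ 2 : ℂ)) = (R : ℂ) ∧
      (c i) ^ 2 * (‖s‖) ^ 2 ≤ n * R := fun i =>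
    aux_key (Matrix.of fun j k => M i (x j) (x k)) (hpsd i n x) (c i)
      (fun j => hdiag i (x j)) a
  choose R hR0 hReq hRle using key
  -- inner ℂ g one = s
  have hgone : (inner ℂ g one : ℂ) = s := by
    rw [hg, sum_inner, hs]
    simp [inner_smul_left, hone]
  -- inner ℂ g g = sum of R i
  have hgg : (inner ℂ g g : ℂ) = ((∑ i, R i : ℝ) : ℂ) := by
    have e1 : (inner ℂ g g : ℂ) = ∑ j, ∑ k, a j * (starRingEnd ℂ) (a k) *
        (inner ℂ (rep (x j)) (rep (x k)) : ℂ) := by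
      rw [hg, sum_inner]
      refine Finset.sum_congr rfl fun j _ => ?_
      rw [inner_sum]
      refine Finset.sum_congr rfl fun k _ => ?_
      rw [inner_smul_left, inner_smul_right]
      simp only [Complex.conj_conj]
      ring
    rw [e1]
    have e2 : ∀ j k, (inner ℂ (rep (x j)) (rep (x k)) : ℂ)
        = ∑ i, ((‖M i (x k) (x j)‖) ^ 2 : ℂ) := by
      intro j k
      rw [← hK (x k) (x j), hsum]
    simp_rw [e2]
    push_cast
    rw [Finset.sum_comm]
    calc ∑ k, ∑ j, a j * (starRingEnd ℂ) (a k) *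
            ∑ i, ((‖M i (x k) (x j)‖) ^ 2 : ℂ)
        = ∑ j, ∑ k, (starRingEnd ℂ) (a j) * a k *
            ∑ i, ((‖M i (x j) (x k)‖) ^ 2 : ℂ) := by
          refine Finset.sum_congr rfl fun j _ => Finset.sum_congr rfl fun k _ => ?_
          ring
      _ = ∑ i, ∑ j, ∑ k, (starRingEnd ℂ) (a j) * a k *
            ((‖M i (x j) (x k)‖) ^ 2 : ℂ) := by
          simp_rw [Finset.mul_sum]
          exact (Finset.sum_congr rfl fun j _ => Finset.sum_comm).trans Finset.sum_comm
      _ = ∑ i, ((R i : ℝ) : ℂ) := Finset.sum_congr rfl fun i _ => hReq i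
  have hgnorm : ‖g‖ ^ 2 = ∑ i, R i := by
    have h2 := inner_self_eq_norm_sq (𝕜 := ℂ) g
    rw [hgg] at h2
    simpa using h2.symm
  -- sum the per-i inequalities
  have hsumR : κ * (‖s‖) ^ 2 ≤ n * ∑ i, R i := by
    rw [hκ, Finset.sum_mul, Finset.mul_sum]
    exact Finset.sum_le_sum fun i _ => hRle i
  -- expand the norm
  have hexp : ‖g - one‖ ^ 2 = ‖g‖ ^ 2 - 2 * Complex.re (inner ℂ g one : ℂ) + ‖one‖ ^ 2 :=
    @norm_sub_sq ℂ _ _ _ _ g one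
  rw [hexp, hgone, hgnorm]
  have hre : Complex.re s ≤ ‖s‖ := Complex.re_le_norm s
  have hA0 : (0 : ℝ) ≤ ‖s‖ := norm_nonneg s
  have hd : κ * (n / κ) = n := by field_simp
  nlinarith [sq_nonneg (κ * ‖s‖ - n), mul_pos hκpos hnR,
    mul_le_mul_of_nonneg_left hre (le_of_lt (mul_pos hκpos hnR)), hsumR,
    mul_le_mul_of_nonneg_left hsumR hκpos.le]
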